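/- arXiv:1112.3818 — 2 statements merged into one kernel-verified Lean document; each statement's English description precedes it below -/
import Mathlib

section
/- For every t ∈ ℝ, the function s ↦ a(t−s) u(s) is Bochner integrable on (−∞, t); for every κ ≥ 0 the state variable x(t,κ) := ∫_{−∞}^t e^{−κ(t−s)} u(s) ds is a well-defined Bochner integral in H; the map κ ↦ x(t,κ) is Bochner integrable with respect to ν on [0,∞); and the identity ∫_{−∞}^t a(t−s) u(s) ds = ∫_{[0,∞)} x(t,κ) ν(dκ) holds in H. -/
open MeasureTheory Set

/-- For a completely monotone kernel `a(t) = ∫ e^{-κ t} ν(dκ)` (finite for `t > 0`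
and integrable near `0`) and an exponentially decaying continuous history `u`,
the convolution `∫_{-∞}^t a(t-s) u(s) ds` is a well-defined Bochner integral, each
state variable `x(t,κ) = ∫_{-∞}^t e^{-κ(t-s)} u(s) ds` is well defined, the map
`κ ↦ x(t,κ)` is `ν`-integrable on `[0,∞)`, and
`∫_{-∞}^t a(t-s) u(s) ds = ∫ x(t,κ) ν(dκ)`. -/
theorem stmt4
    {H : Type*} [NormedAddCommGroup H] [InnerProductSpace ℝ H]
    [CompleteSpace H] [SecondCountableTopology H]
    (ν : Measure ℝ)
    (haInt : ∀ t : ℝ, 0 < t →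
      IntegrableOn (fun κ : ℝ => Real.exp (-κ * t)) (Ici 0) ν)
    (ha1 : IntegrableOn (fun t : ℝ => ∫ κ in Ici (0:ℝ), Real.exp (-κ * t) ∂ν)
      (Ioo 0 1) volume)
    (M ω : ℝ) (hM : 0 < M) (hω : 0 < ω)
    (u : ℝ → H) (hu : Continuous u)
    (hbound : ∀ s : ℝ, s ≤ 0 → ‖u s‖ ≤ M * Real.exp (ω * s)) :
    ∀ t : ℝ,
      IntegrableOn
        (fun s : ℝ => (∫ κ in Ici (0:ℝ), Real.exp (-κ * (t - s)) ∂ν) • u s)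
        (Iio t) volume ∧
      (∀ κ : ℝ, 0 ≤ κ →
        IntegrableOn (fun s : ℝ => Real.exp (-κ * (t - s)) • u s) (Iio t) volume) ∧
      IntegrableOn (fun κ : ℝ => ∫ s in Iio t, Real.exp (-κ * (t - s)) • u s)
        (Ici 0) ν ∧
      (∫ s in Iio t, (∫ κ in Ici (0:ℝ), Real.exp (-κ * (t - s)) ∂ν) • u s) =
        ∫ κ in Ici (0:ℝ), (∫ s in Iio t, Real.exp (-κ * (t - s)) • u s) ∂ν := by
  
  intro t
  -- the restricted measures
  set νI := ν.restrict (Ici (0:ℝ)) with hνI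
  -- σ-finiteness of νI
  have hg1 : Integrable (fun κ => Real.exp (-κ * 1)) νI := haInt 1 one_pos
  haveI hσ : SigmaFinite νI := by
    refine ⟨⟨⟨fun n => Iic (n : ℝ), fun _ => trivial, fun n => ?_, ?_⟩⟩⟩
    · refine lt_of_le_of_lt (measure_mono ?_) (hg1.measure_ge_lt_top (Real.exp_pos (-(n:ℝ))))
      intro κ hκ
      simp only [mem_setOf_eq, mem_Iic] at *
      rw [mul_one]
      exact Real.exp_le_exp.2 (by linarith)
    · exact iUnion_eq_univ_iff.2 fun x => ⟨⌈x⌉₊, mem_Iic.2 (Nat.le_ceil x)⟩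
  -- uniform exponential bound up to time t
  obtain ⟨C, hC0, hC⟩ : ∃ C : ℝ, 0 < C ∧ ∀ s ≤ t, ‖u s‖ ≤ C * Real.exp (ω * s) := by
    obtain ⟨K, hK⟩ := (isCompact_Icc (a := (0:ℝ)) (b := max t 0)).exists_bound_of_continuousOn
      hu.continuousOn
    refine ⟨max M (max K 1), lt_of_lt_of_le hM (le_max_left _ _), fun s hs => ?_⟩
    rcases le_or_gt s 0 with h0 | h0
    · exact (hbound s h0).trans (mul_le_mul_of_nonneg_right (le_max_left _ _) (Real.exp_pos _).le)
    · have hs' : s ∈ Icc (0:ℝ) (max t 0) := ⟨h0.le, le_max_of_le_left hs⟩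
      have h1 : (1:ℝ) ≤ Real.exp (ω * s) := by
        rw [Real.one_le_exp_iff]; positivity
      calc ‖u s‖ ≤ K := hK s hs'
        _ ≤ max M (max K 1) := le_max_of_le_right (le_max_left _ _)
        _ = max M (max K 1) * 1 := (mul_one _).symm
        _ ≤ max M (max K 1) * Real.exp (ω * s) := by
            apply mul_le_mul_of_nonneg_left h1
            exact le_trans hM.le (le_max_left _ _)
  -- integrability of exponentials on Iio t
  have hexp : ∀ {c : ℝ}, 0 < c → IntegrableOn (fun s : ℝ => Real.exp (c * s)) (Iio t) volume := by
    intro c hc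
    have h := exp_neg_integrableOn_Ioi (-t) hc
    rw [← (Measure.measurePreserving_neg (volume : Measure ℝ)).integrableOn_comp_preimage
        (Homeomorph.neg ℝ).measurableEmbedding] at h
    simpa [Function.comp_def, neg_mul_neg] using h
  -- claim 2
  have claim2 : ∀ κ : ℝ, 0 ≤ κ →
      IntegrableOn (fun s : ℝ => Real.exp (-κ * (t - s)) • u s) (Iio t) volume := by
    intro κ hκ
    refine Integrable.mono' ((hexp hω).const_mul C)
      ((Continuous.aestronglyMeasurable (by fun_prop)).restrict) ?_
    refine (ae_restrict_iff' measurableSet_Iio).2 (ae_of_all _ fun s hs => ?_)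
    have hs' : s < t := hs
    have he1 : Real.exp (-κ * (t - s)) ≤ 1 := by
      rw [Real.exp_le_one_iff]
      nlinarith
    rw [norm_smul, Real.norm_eq_abs, abs_of_pos (Real.exp_pos _)]
    calc Real.exp (-κ * (t - s)) * ‖u s‖ ≤ 1 * (C * Real.exp (ω * s)) := by
          apply mul_le_mul he1 (hC s hs'.le) (norm_nonneg _) one_pos.le
      _ = C * Real.exp (ω * s) := one_mul _
  -- notation for the kernel
  set A : ℝ → ℝ := fun τ => ∫ κ in Ici (0:ℝ), Real.exp (-κ * τ) ∂ν with hA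
  have hA_nonneg : ∀ τ, 0 ≤ A τ := fun τ => integral_nonneg fun κ => (Real.exp_pos _).le
  have hA_meas : StronglyMeasurable fun s : ℝ => A (t - s) := by
    have hc : StronglyMeasurable (Function.uncurry fun s κ : ℝ => Real.exp (-κ * (t - s))) :=
      Continuous.stronglyMeasurable (by fun_prop)
    exact hc.integral_prod_right
  -- core estimate : s ↦ A (t - s) * ‖u s‖ integrable on Iio t
  have core : IntegrableOn (fun s : ℝ => A (t - s) * ‖u s‖) (Iio t) volume := by
    have hsplit : Iio t = Iio (t - 1) ∪ Ico (t - 1) t := by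
      rw [Iio_union_Ico_eq_Iio (by linarith)]
    rw [hsplit]
    apply IntegrableOn.union
    · -- far past: bounded by A 1 * C * exp(ω s)
      refine Integrable.mono' (((hexp hω).mono_set (Iio_subset_Iio (by linarith))).const_mul
        (A 1 * C)) ((hA_meas.mul hu.norm.stronglyMeasurable).aestronglyMeasurable.restrict) ?_
      refine (ae_restrict_iff' measurableSet_Iio).2 (ae_of_all _ fun s hs => ?_)
      have hs' : s < t - 1 := hs
      have hmono : A (t - s) ≤ A 1 := by
        refine setIntegral_mono_on (haInt (t - s) (by linarith)) (haInt 1 one_pos)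
          measurableSet_Ici fun κ hκ => ?_
        have hκ0 : (0:ℝ) ≤ κ := hκ
        exact Real.exp_le_exp.2 (by nlinarith)
      rw [Real.norm_eq_abs, abs_of_nonneg (mul_nonneg (hA_nonneg _) (norm_nonneg _))]
      calc A (t - s) * ‖u s‖ ≤ A 1 * (C * Real.exp (ω * s)) := by
            apply mul_le_mul hmono (hC s (by linarith)) (norm_nonneg _) (hA_nonneg 1)
        _ = A 1 * C * Real.exp (ω * s) := by ring
    · -- recent past: bounded by (C * exp(ω t)) * A (t - s)
      have h01 : IntervalIntegrable A volume 0 1 :=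
        (intervalIntegrable_iff_integrableOn_Ioo_of_le zero_le_one).2 ha1
      have h2 : IntegrableOn (fun s : ℝ => A (t - s)) (Ioo (t - 1) t) volume := by
        have := (h01.comp_sub_left t).symm
        rw [sub_zero] at this
        exact (intervalIntegrable_iff_integrableOn_Ioo_of_le (by linarith)).1 this
      have h3 : IntegrableOn (fun s : ℝ => A (t - s)) (Ico (t - 1) t) volume := by
        rwa [integrableOn_Ico_iff_integrableOn_Ioo]
      refine Integrable.mono' (h3.const_mul (C * Real.exp (ω * t)))
        ((hA_meas.mul hu.norm.stronglyMeasurable).aestronglyMeasurable.restrict) ?_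
      refine (ae_restrict_iff' measurableSet_Ico).2 (ae_of_all _ fun s hs => ?_)
      have hst : s < t := hs.2
      rw [Real.norm_eq_abs, abs_of_nonneg (mul_nonneg (hA_nonneg _) (norm_nonneg _))]
      calc A (t - s) * ‖u s‖ ≤ A (t - s) * (C * Real.exp (ω * t)) := by
            apply mul_le_mul_of_nonneg_left _ (hA_nonneg _)
            refine (hC s hst.le).trans ?_
            exact mul_le_mul_of_nonneg_left (Real.exp_le_exp.2 (by nlinarith)) hC0.le
        _ = C * Real.exp (ω * t) * A (t - s) := by ring
  -- product integrability
  have hprod : Integrable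
      (Function.uncurry fun (s κ : ℝ) => Real.exp (-κ * (t - s)) • u s)
      ((volume.restrict (Iio t)).prod νI) := by
    rw [integrable_prod_iff (Continuous.aestronglyMeasurable (by fun_prop))]
    constructor
    · filter_upwards [ae_restrict_mem measurableSet_Iio] with s hs
      have hs' : s < t := hs
      exact (haInt (t - s) (by linarith)).smul_const (u s)
    · apply core.congr
      refine (ae_of_all _ fun s => ?_)
      simp only [Function.uncurry]
      rw [← integral_mul_const]
      congr 1
      funext κ
      rw [norm_smul, Real.norm_eq_abs, abs_of_pos (Real.exp_pos _)]
  -- claim 1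
  have claim1 : IntegrableOn
      (fun s : ℝ => (∫ κ in Ici (0:ℝ), Real.exp (-κ * (t - s)) ∂ν) • u s) (Iio t) volume := by
    have h1 := hprod.integral_prod_left
    refine h1.congr (ae_of_all _ fun s => ?_)
    simp only [Function.uncurry]
    exact integral_smul_const _ _
  -- claim 3
  have claim3 : IntegrableOn (fun κ : ℝ => ∫ s in Iio t, Real.exp (-κ * (t - s)) • u s)
      (Ici 0) ν := hprod.integral_prod_right
  refine ⟨claim1, claim2, claim3, ?_⟩
  rw [← integral_integral_swap hprod]
  simp_rw [integral_smul_const]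
end

section
/- There exists a constant c > 0, depending only on C and ‖J‖, such that for all x₁, x₂ ∈ X and z₁, z₂ ∈ Ξ*: |ψ(x₁,z₁) − ψ(x₂,z₂)| ≤ c‖z₁ − z₂‖ + c(1 + ‖z₁‖ + ‖z₂‖)(1 + ‖x₁‖ + ‖x₂‖)‖x₁ − x₂‖. -/
open Set

/-- If two functions differ pointwise by at most `B` on a nonempty set and both
images are bounded below, their infima differ by at most `B`. -/
lemma sInf_abs_sub_le {U : Type*} {𝒰 : Set U} (h𝒰 : 𝒰.Nonempty)
    (f g : U → ℝ) (B : ℝ) (hfg : ∀ γ ∈ 𝒰, |f γ - g γ| ≤ B)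
    (hf : BddBelow (f '' 𝒰)) (hg : BddBelow (g '' 𝒰)) :
    |sInf (f '' 𝒰) - sInf (g '' 𝒰)| ≤ B := by
  have key1 : sInf (f '' 𝒰) - B ≤ sInf (g '' 𝒰) := by
    refine le_csInf (h𝒰.image g) ?_
    rintro y ⟨γ, hγ, rfl⟩
    have h1 : sInf (f '' 𝒰) ≤ f γ := csInf_le hf ⟨γ, hγ, rfl⟩
    have h2 := abs_le.mp (hfg γ hγ)
    linarith [h2.1, h2.2]
  have key2 : sInf (g '' 𝒰) - B ≤ sInf (f '' 𝒰) := by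
    refine le_csInf (h𝒰.image f) ?_
    rintro y ⟨γ, hγ, rfl⟩
    have h1 : sInf (g '' 𝒰) ≤ g γ := csInf_le hg ⟨γ, hγ, rfl⟩
    have h2 := abs_le.mp (hfg γ hγ)
    linarith [h2.1, h2.2]
  rw [abs_sub_le_iff]
  constructor <;> linarith

set_option maxHeartbeats 1000000 in
/-- Lipschitz-type estimate for the Hamiltonian
`ψ(x,z) = inf { l(Jx,γ) + z(r(Jx,γ)) : γ ∈ 𝒰 }`: there is `c > 0`, depending
only on `C` and `‖J‖`, with
`|ψ(x₁,z₁) − ψ(x₂,z₂)| ≤ c‖z₁−z₂‖ + c(1+‖z₁‖+‖z₂‖)(1+‖x₁‖+‖x₂‖)‖x₁−x₂‖`. -/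
theorem stmt9
    {X H U Ξ : Type*} [NormedAddCommGroup X] [NormedSpace ℝ X]
    [NormedAddCommGroup H] [InnerProductSpace ℝ H]
    [NormedAddCommGroup U] [InnerProductSpace ℝ U]
    [NormedAddCommGroup Ξ] [InnerProductSpace ℝ Ξ]
    (J : X →L[ℝ] H) (𝒰 : Set U) (h𝒰 : 𝒰.Nonempty)
    (C : ℝ) (hC : 0 < C)
    (l : H → U → ℝ) (r : H → U → Ξ)
    (hlLip : ∀ u u' : H, ∀ γ ∈ 𝒰,
      |l u γ - l u' γ| ≤ C * (1 + ‖u‖ + ‖u'‖) * ‖u - u'‖)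
    (hl0 : ∀ γ ∈ 𝒰, |l 0 γ| ≤ C)
    (hrB : ∀ u : H, ∀ γ ∈ 𝒰, ‖r u γ‖ ≤ C)
    (hrLip : ∀ u u' : H, ∀ γ ∈ 𝒰,
      ‖r u γ - r u' γ‖ ≤ C * (1 + ‖u‖ + ‖u'‖) * ‖u - u'‖) :
    ∃ c : ℝ, 0 < c ∧
      ∀ (x₁ x₂ : X) (z₁ z₂ : Ξ →L[ℝ] ℝ),
        |sInf {y : ℝ | ∃ γ ∈ 𝒰, y = l (J x₁) γ + z₁ (r (J x₁) γ)} -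
          sInf {y : ℝ | ∃ γ ∈ 𝒰, y = l (J x₂) γ + z₂ (r (J x₂) γ)}| ≤
        c * ‖z₁ - z₂‖ +
          c * (1 + ‖z₁‖ + ‖z₂‖) * (1 + ‖x₁‖ + ‖x₂‖) * ‖x₁ - x₂‖ := by
  have hJ : (0:ℝ) ≤ ‖J‖ := norm_nonneg _
  refine ⟨C * (1 + ‖J‖)^2, by positivity, ?_⟩
  intro x₁ x₂ z₁ z₂
  set c := C * (1 + ‖J‖)^2 with hc
  -- bounded below
  have bdd : ∀ (x : X) (z : Ξ →L[ℝ] ℝ),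
      BddBelow ((fun γ => l (J x) γ + z (r (J x) γ)) '' 𝒰) := by
    intro x z
    refine ⟨-C - C * (1 + ‖J x‖) * ‖J x‖ - ‖z‖ * C, ?_⟩
    rintro y ⟨γ, hγ, rfl⟩
    dsimp only
    have h1 : |l (J x) γ - l 0 γ| ≤ C * (1 + ‖J x‖ + ‖(0:H)‖) * ‖J x - 0‖ :=
      hlLip _ _ γ hγ
    simp only [norm_zero, add_zero, sub_zero] at h1
    have h2 := abs_le.mp h1
    have h3 := abs_le.mp (hl0 γ hγ)
    have h4 : |z (r (J x) γ)| ≤ ‖z‖ * C := by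
      calc |z (r (J x) γ)| ≤ ‖z‖ * ‖r (J x) γ‖ := z.le_opNorm _
        _ ≤ ‖z‖ * C := by
          exact mul_le_mul_of_nonneg_left (hrB _ γ hγ) (norm_nonneg z)
    have h5 := abs_le.mp h4
    linarith [h2.1, h3.1, h5.1]
  -- pointwise bound
  have key : ∀ γ ∈ 𝒰,
      |(l (J x₁) γ + z₁ (r (J x₁) γ)) - (l (J x₂) γ + z₂ (r (J x₂) γ))| ≤
        c * ‖z₁ - z₂‖ + c * (1 + ‖z₁‖ + ‖z₂‖) * (1 + ‖x₁‖ + ‖x₂‖) * ‖x₁ - x₂‖ := by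
    intro γ hγ
    set a := J x₁
    set b := J x₂
    have hdec : (l a γ + z₁ (r a γ)) - (l b γ + z₂ (r b γ)) =
        (l a γ - l b γ) + (z₁ - z₂) (r a γ) + z₂ (r a γ - r b γ) := by
      simp [ContinuousLinearMap.sub_apply, map_sub]; ring
    have h1 : |l a γ - l b γ| ≤ C * (1 + ‖a‖ + ‖b‖) * ‖a - b‖ := hlLip _ _ γ hγ
    have h2 : |(z₁ - z₂) (r a γ)| ≤ ‖z₁ - z₂‖ * C := by
      calc |(z₁ - z₂) (r a γ)| ≤ ‖z₁ - z₂‖ * ‖r a γ‖ := (z₁ - z₂).le_opNorm _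
        _ ≤ ‖z₁ - z₂‖ * C := mul_le_mul_of_nonneg_left (hrB _ γ hγ) (norm_nonneg _)
    have h3 : |z₂ (r a γ - r b γ)| ≤ ‖z₂‖ * (C * (1 + ‖a‖ + ‖b‖) * ‖a - b‖) := by
      calc |z₂ (r a γ - r b γ)| ≤ ‖z₂‖ * ‖r a γ - r b γ‖ := z₂.le_opNorm _
        _ ≤ _ := mul_le_mul_of_nonneg_left (hrLip _ _ γ hγ) (norm_nonneg _)
    have ha : ‖a‖ ≤ ‖J‖ * ‖x₁‖ := J.le_opNorm x₁
    have hb : ‖b‖ ≤ ‖J‖ * ‖x₂‖ := J.le_opNorm x₂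
    have hab : ‖a - b‖ ≤ ‖J‖ * ‖x₁ - x₂‖ := by
      have : a - b = J (x₁ - x₂) := by simp [a, b]
      rw [this]; exact J.le_opNorm _
    have hx1 : (0:ℝ) ≤ ‖x₁‖ := norm_nonneg _
    have hx2 : (0:ℝ) ≤ ‖x₂‖ := norm_nonneg _
    have hdx : (0:ℝ) ≤ ‖x₁ - x₂‖ := norm_nonneg _
    have hz1 : (0:ℝ) ≤ ‖z₁‖ := norm_nonneg _
    have hz2 : (0:ℝ) ≤ ‖z₂‖ := norm_nonneg _
    have hab0 : (0:ℝ) ≤ ‖a - b‖ := norm_nonneg _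
    -- the Lipschitz factor bound
    have hfac : C * (1 + ‖a‖ + ‖b‖) * ‖a - b‖ ≤
        c * (1 + ‖x₁‖ + ‖x₂‖) * ‖x₁ - x₂‖ := by
      have hsum : 1 + ‖a‖ + ‖b‖ ≤ (1 + ‖J‖) * (1 + ‖x₁‖ + ‖x₂‖) := by
        nlinarith
      have step1 : C * (1 + ‖a‖ + ‖b‖) * ‖a - b‖ ≤
          C * ((1 + ‖J‖) * (1 + ‖x₁‖ + ‖x₂‖)) * (‖J‖ * ‖x₁ - x₂‖) := by
        have h1a : (0:ℝ) ≤ 1 + ‖a‖ + ‖b‖ := by positivity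
        nlinarith [mul_le_mul hsum hab hab0 (by positivity : (0:ℝ) ≤ (1 + ‖J‖) * (1 + ‖x₁‖ + ‖x₂‖))]
      refine step1.trans ?_
      rw [hc]
      nlinarith [mul_nonneg (mul_nonneg (mul_nonneg hC.le (by positivity : (0:ℝ) ≤ 1 + ‖J‖))
        (by positivity : (0:ℝ) ≤ 1 + ‖x₁‖ + ‖x₂‖)) hdx]
    calc |(l a γ + z₁ (r a γ)) - (l b γ + z₂ (r b γ))|
        ≤ |l a γ - l b γ| + |(z₁ - z₂) (r a γ)| + |z₂ (r a γ - r b γ)| := by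
          rw [hdec]; exact abs_add_three _ _ _
      _ ≤ c * ‖z₁ - z₂‖ + c * (1 + ‖z₁‖ + ‖z₂‖) * (1 + ‖x₁‖ + ‖x₂‖) * ‖x₁ - x₂‖ := by
          have hC' : C ≤ c := by
            rw [hc]
            nlinarith [mul_nonneg hC.le hJ, mul_nonneg (mul_nonneg hC.le hJ) hJ]
          have hzd : (0:ℝ) ≤ ‖z₁ - z₂‖ := norm_nonneg _
          have t1 : |l a γ - l b γ| ≤ c * (1 + ‖x₁‖ + ‖x₂‖) * ‖x₁ - x₂‖ := h1.trans hfac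
          have t2 : |(z₁ - z₂) (r a γ)| ≤ c * ‖z₁ - z₂‖ := by
            refine h2.trans ?_
            rw [mul_comm]
            exact mul_le_mul_of_nonneg_right hC' hzd
          have t3 : |z₂ (r a γ - r b γ)| ≤ ‖z₂‖ * (c * (1 + ‖x₁‖ + ‖x₂‖) * ‖x₁ - x₂‖) :=
            h3.trans (mul_le_mul_of_nonneg_left hfac hz2)
          have hcpos : (0:ℝ) < c := by rw [hc]; positivity
          have hP : (0:ℝ) ≤ c * (1 + ‖x₁‖ + ‖x₂‖) * ‖x₁ - x₂‖ := by positivity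
          nlinarith [mul_nonneg hz1 hP, mul_nonneg hz2 hP]
  have hset1 : {y : ℝ | ∃ γ ∈ 𝒰, y = l (J x₁) γ + z₁ (r (J x₁) γ)} =
      (fun γ => l (J x₁) γ + z₁ (r (J x₁) γ)) '' 𝒰 := by
    ext y; constructor
    · rintro ⟨γ, hγ, rfl⟩; exact ⟨γ, hγ, rfl⟩
    · rintro ⟨γ, hγ, rfl⟩; exact ⟨γ, hγ, rfl⟩
  have hset2 : {y : ℝ | ∃ γ ∈ 𝒰, y = l (J x₂) γ + z₂ (r (J x₂) γ)} =
      (fun γ => l (J x₂) γ + z₂ (r (J x₂) γ)) '' 𝒰 := by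
    ext y; constructor
    · rintro ⟨γ, hγ, rfl⟩; exact ⟨γ, hγ, rfl⟩
    · rintro ⟨γ, hγ, rfl⟩; exact ⟨γ, hγ, rfl⟩
  rw [hset1, hset2]
  exact sInf_abs_sub_le h𝒰 _ _ _ key (bdd x₁ z₁) (bdd x₂ z₂)
end
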